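/- Fix z ∈ [0, u_max] and C ≥ 0. The constraint set {s ∈ 𝒞_a : g(s, z) ≤ −C} of the left-boundary stabilization problem is nonempty if and only if g(δ, z) ≤ −C, where δ = min(u*, û); equivalently, the minimum of s ↦ g(s, z) over 𝒞_a is attained at s = δ. -/
import Mathlib


/-- Feasibility of the left-boundary stabilization problem: for fixed
`z ∈ [0, u_max]` and `C ≥ 0`, the constraint set `{s ∈ 𝒞_a : g(s, z) ≤ -C}`
is nonempty if and only if `g(δ, z) ≤ -C`, where `δ = min(u*, û)`;
equivalently, the minimum of `s ↦ g(s, z)` over `𝒞_a = [0, (2u* + u_max)/4]`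
is attained at `s = δ`. -/
theorem left_stabilization_feasibility
    (umax ustar uhat : ℝ) (f F : ℝ → ℝ) (g : ℝ → ℝ → ℝ)
    (humax : 0 < umax)
    (hustar : ustar ∈ Set.Icc (0 : ℝ) umax)
    (huhat : uhat = umax / 2)
    (hf : ∀ u : ℝ, f u = u * (1 - u / umax))
    (hF : ∀ u : ℝ, F u = u ^ 2 / 2 - u ^ 3 / (3 * umax))
    (hg : ∀ s z : ℝ, g s z = (s - ustar) * f s - (z - ustar) * f z - F s + F z) :
    ∀ z ∈ Set.Icc (0 : ℝ) umax, ∀ C : ℝ, 0 ≤ C →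
      (min ustar uhat ∈ Set.Icc (0 : ℝ) ((2 * ustar + umax) / 4) ∧
        ∀ s ∈ Set.Icc (0 : ℝ) ((2 * ustar + umax) / 4),
          g (min ustar uhat) z ≤ g s z) ∧
      ({s ∈ Set.Icc (0 : ℝ) ((2 * ustar + umax) / 4) | g s z ≤ -C}.Nonempty ↔
        g (min ustar uhat) z ≤ -C) := by
  intro z hz C hC
  obtain ⟨hu0, huM⟩ := hustar
  have hne : umax ≠ 0 := ne_of_gt humax
  have hmin :
      min ustar uhat ∈ Set.Icc (0 : ℝ) ((2 * ustar + umax) / 4) ∧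
      ∀ s ∈ Set.Icc (0 : ℝ) ((2 * ustar + umax) / 4),
        g (min ustar uhat) z ≤ g s z := by
    rcases le_total ustar uhat with hcase | hcase
    · rw [min_eq_left hcase]
      subst huhat
      constructor
      · exact Set.mem_Icc.mpr ⟨hu0, by linarith⟩
      · intro s hs
        obtain ⟨hs0, hs1⟩ := hs
        have key : g s z - g ustar z
            = (s - ustar) ^ 2 * (3 * umax - 2 * ustar - 4 * s) / (6 * umax) := by
          simp only [hg, hf, hF]
          field_simp
          ring
        have hpos : 0 ≤ (s - ustar) ^ 2 * (3 * umax - 2 * ustar - 4 * s) / (6 * umax) :=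
          div_nonneg (mul_nonneg (sq_nonneg _) (by linarith)) (by linarith)
        linarith
    · rw [min_eq_right hcase]
      subst huhat
      constructor
      · exact Set.mem_Icc.mpr ⟨by linarith, by linarith⟩
      · intro s hs
        obtain ⟨hs0, hs1⟩ := hs
        have key : g s z - g (umax / 2) z
            = (s - umax / 2) ^ 2 * (6 * ustar - umax - 4 * s) / (6 * umax) := by
          simp only [hg, hf, hF]
          field_simp
          ring
        have hpos : 0 ≤ (s - umax / 2) ^ 2 * (6 * ustar - umax - 4 * s) / (6 * umax) :=
          div_nonneg (mul_nonneg (sq_nonneg _) (by linarith)) (by linarith)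
        linarith
  refine ⟨hmin, ?_, ?_⟩
  · rintro ⟨s, hsI, hsC⟩
    exact le_trans (hmin.2 s hsI) hsC
  · intro h
    exact ⟨min ustar uhat, hmin.1, h⟩
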